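/- Let A be a commutative ring with a Poisson bracket {·,·} and let w be a derivation of A that is a Poisson vector field. Then there is a unique biadditive bracket B on the Laurent polynomial ring A[t,t⁻¹] satisfying B(a·tⁿ, b·tᵐ) = ({a,b} + n·(a·w(b)) − m·(b·w(a)))·t^{n+m} for all a, b ∈ A and n, m ∈ ℤ, and this bracket B is a Poisson bracket on A[t,t⁻¹]: it is antisymmetric, satisfies the Leibniz rule in each argument, and satisfies the Jacobi identity. (This is the Poisson structure π^w = π + t∂_t ∧ w on A[t,t⁻¹]; the Jacobi identity for B holds precisely because w is a Poisson vector field.) -/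

import Mathlib

open LaurentPolynomial


section Aux
variable {A : Type*} [CommRing A] (P : A → A → A) (w : A → A)

def pc (n m : ℤ) (a b : A) : A := P a b + n • (a * w b) - m • (b * w a)

theorem Psub₂ (hadd₂ : ∀ a b c : A, P a (b + c) = P a b + P a c) (a x y : A) :
    P a (x - y) = P a x - P a y :=
  map_sub (AddMonoidHom.mk' (P a) (hadd₂ a)) x y

theorem Pzsmul₂ (hadd₂ : ∀ a b c : A, P a (b + c) = P a b + P a c) (a : A) (n : ℤ) (x : A) :
    P a (n • x) = n • P a x :=
  map_zsmul (AddMonoidHom.mk' (P a) (hadd₂ a)) n x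

theorem Pzero₁ (hadd₁ : ∀ a b c : A, P (a + b) c = P a c + P b c) (b : A) : P 0 b = 0 := by
  have := hadd₁ 0 0 b; simpa using this.symm

theorem Pzero₂ (hadd₂ : ∀ a b c : A, P a (b + c) = P a b + P a c) (a : A) : P a 0 = 0 := by
  have := hadd₂ a 0 0; simpa using this.symm

theorem wzero (hwadd : ∀ a b : A, w (a + b) = w a + w b) : w 0 = 0 := by
  have := hwadd 0 0; simpa using this.symm

theorem wsub (hwadd : ∀ a b : A, w (a + b) = w a + w b) (x y : A) : w (x - y) = w x - w y :=
  map_sub (AddMonoidHom.mk' w hwadd) x y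

theorem wzsmul (hwadd : ∀ a b : A, w (a + b) = w a + w b) (n : ℤ) (x : A) : w (n • x) = n • w x :=
  map_zsmul (AddMonoidHom.mk' w hwadd) n x

theorem pc_zero₁ (hadd₁ : ∀ a b c : A, P (a + b) c = P a c + P b c)
    (hwadd : ∀ a b : A, w (a + b) = w a + w b) (n m : ℤ) (b : A) : pc P w n m 0 b = 0 := by
  simp [pc, Pzero₁ P hadd₁, wzero w hwadd]

theorem pc_zero₂ (hadd₂ : ∀ a b c : A, P a (b + c) = P a b + P a c)
    (hwadd : ∀ a b : A, w (a + b) = w a + w b) (n m : ℤ) (a : A) : pc P w n m a 0 = 0 := by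
  simp [pc, Pzero₂ P hadd₂, wzero w hwadd]

theorem pc_add₁ (hadd₁ : ∀ a b c : A, P (a + b) c = P a c + P b c)
    (hwadd : ∀ a b : A, w (a + b) = w a + w b) (n m : ℤ) (a a' b : A) :
    pc P w n m (a + a') b = pc P w n m a b + pc P w n m a' b := by
  simp only [pc, hadd₁, hwadd, zsmul_eq_mul]; ring

theorem pc_add₂ (hadd₂ : ∀ a b c : A, P a (b + c) = P a b + P a c)
    (hwadd : ∀ a b : A, w (a + b) = w a + w b) (n m : ℤ) (a b b' : A) :
    pc P w n m a (b + b') = pc P w n m a b + pc P w n m a b' := by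
  simp only [pc, hadd₂, hwadd, zsmul_eq_mul]; ring

theorem pc_anti (hanti : ∀ a b : A, P a b = - P b a) (n m : ℤ) (a b : A) :
    pc P w n m a b + pc P w m n b a = 0 := by
  simp only [pc, zsmul_eq_mul]; linear_combination hanti a b

theorem pc_leib (hleib : ∀ a b c : A, P a (b * c) = P a b * c + b * P a c)
    (hwleib : ∀ a b : A, w (a * b) = a * w b + b * w a) (n m k : ℤ) (a b c : A) :
    pc P w n (m + k) a (b * c) = pc P w n m a b * c + b * pc P w n k a c := by
  simp only [pc, hleib, hwleib, zsmul_eq_mul]; push_cast; ring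

theorem pc_jacobi
    (hadd₂ : ∀ a b c : A, P a (b + c) = P a b + P a c)
    (hanti : ∀ a b : A, P a b = - P b a)
    (hleib : ∀ a b c : A, P a (b * c) = P a b * c + b * P a c)
    (hjacobi : ∀ a b c : A, P a (P b c) + P b (P c a) + P c (P a b) = 0)
    (hwadd : ∀ a b : A, w (a + b) = w a + w b)
    (hwleib : ∀ a b : A, w (a * b) = a * w b + b * w a)
    (hwpoisson : ∀ a b : A, w (P a b) = P (w a) b + P a (w b))
    (n m k : ℤ) (a b c : A) :
    pc P w n (m + k) a (pc P w m k b c) + pc P w m (k + n) b (pc P w k n c a)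
      + pc P w k (n + m) c (pc P w n m a b) = 0 := by
  simp only [pc, Psub₂ P hadd₂, Pzsmul₂ P hadd₂, hadd₂, hleib,
    wsub w hwadd, wzsmul w hwadd, hwadd, hwleib, hwpoisson]
  simp only [hanti b a, hanti c b, hanti a c, hanti (w c) a, hanti c (w b), hanti (w a) b,
    zsmul_eq_mul]
  push_cast
  linear_combination hjacobi a b c

end Aux

section LP
variable {A : Type*} [CommRing A]

theorem LPind {M : LaurentPolynomial A → Prop}
    (hmono : ∀ (a : A) (n : ℤ), M (LaurentPolynomial.C a * T n))
    (hadd : ∀ p q, M p → M q → M (p + q)) (x : LaurentPolynomial A) : M x :=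
  x.induction_on (fun a => by simpa using hmono a 0) (fun {p q} hp hq => hadd p q hp hq)
    (fun n a _ => hmono a _) (fun n a _ => hmono a _)

theorem CT_mul (r s : A) (i j : ℤ) :
    (LaurentPolynomial.C r * T i) * (LaurentPolynomial.C s * T j)
      = LaurentPolynomial.C (r * s) * T (i + j) := by
  rw [map_mul, T_add]; ring

theorem biadd_eq_zero (D : LaurentPolynomial A → LaurentPolynomial A → LaurentPolynomial A)
    (h1 : ∀ p q y, D (p + q) y = D p y + D q y)
    (h2 : ∀ x p q, D x (p + q) = D x p + D x q)
    (hm : ∀ (a b : A) (n m : ℤ), D (LaurentPolynomial.C a * T n) (LaurentPolynomial.C b * T m) = 0) :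
    ∀ x y, D x y = 0 := by
  have key : ∀ y, ∀ (a : A) (n : ℤ), D (LaurentPolynomial.C a * T n) y = 0 := by
    intro y
    induction y using LPind with
    | hmono b m => intro a n; exact hm a b n m
    | hadd p q hp hq => intro a n; rw [h2, hp, hq, add_zero]
  intro x
  induction x using LPind with
  | hmono a n => exact fun y => key y a n
  | hadd p q hp hq => intro y; rw [h1, hp, hq, add_zero]

theorem triadd_eq_zero
    (D : LaurentPolynomial A → LaurentPolynomial A → LaurentPolynomial A → LaurentPolynomial A)
    (h1 : ∀ p q y z, D (p + q) y z = D p y z + D q y z)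
    (h2 : ∀ x p q z, D x (p + q) z = D x p z + D x q z)
    (h3 : ∀ x y p q, D x y (p + q) = D x y p + D x y q)
    (hm : ∀ (a b c : A) (n m k : ℤ),
      D (LaurentPolynomial.C a * T n) (LaurentPolynomial.C b * T m)
        (LaurentPolynomial.C c * T k) = 0) :
    ∀ x y z, D x y z = 0 := by
  intro x y z
  refine biadd_eq_zero (fun y z => D x y z) (fun p q y => ?_) (fun y p q => h3 x y p q) ?_ y z
  · exact h2 x p q y
  · intro b c m k
    refine biadd_eq_zero
      (fun x z => D x (LaurentPolynomial.C b * T m) z) (fun p q z => h1 p q _ z)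
      (fun x p q => h3 x _ p q) (fun a c n k => hm a b c n m k) x _
end LP

section Bc
variable {A : Type*} [CommRing A] (P : A → A → A) (w : A → A)

noncomputable def Bc (x y : LaurentPolynomial A) : LaurentPolynomial A :=
  Finsupp.sum x.coeff fun n a => Finsupp.sum y.coeff fun m b =>
    LaurentPolynomial.C (P a b + n • (a * w b) - m • (b * w a)) * T (n + m)

theorem coefz₁ (hadd₁ : ∀ a b c : A, P (a + b) c = P a c + P b c)
    (hwadd : ∀ a b : A, w (a + b) = w a + w b) (b : A) (n m : ℤ) :
    P (0:A) b + n • ((0:A) * w b) - m • (b * w 0) = 0 := by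
  have h1 : P (0:A) b = 0 := by have := hadd₁ 0 0 b; simpa using this.symm
  have h2 : w (0:A) = 0 := by have := hwadd 0 0; simpa using this.symm
  simp [h1, h2]

theorem coefz₂ (hadd₂ : ∀ a b c : A, P a (b + c) = P a b + P a c)
    (hwadd : ∀ a b : A, w (a + b) = w a + w b) (a : A) (n m : ℤ) :
    P a (0:A) + n • (a * w 0) - m • ((0:A) * w a) = 0 := by
  have h1 : P a (0:A) = 0 := by have := hadd₂ a 0 0; simpa using this.symm
  have h2 : w (0:A) = 0 := by have := hwadd 0 0; simpa using this.symm
  simp [h1, h2]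

theorem Bc_single (hadd₁ : ∀ a b c : A, P (a + b) c = P a c + P b c)
    (hadd₂ : ∀ a b c : A, P a (b + c) = P a b + P a c)
    (hwadd : ∀ a b : A, w (a + b) = w a + w b) (a b : A) (n m : ℤ) :
    Bc P w (AddMonoidAlgebra.single n a) (AddMonoidAlgebra.single m b) =
      LaurentPolynomial.C (P a b + n • (a * w b) - m • (b * w a)) * T (n + m) := by
  unfold Bc
  simp only [AddMonoidAlgebra.coeff_single]
  rw [Finsupp.sum_single_index, Finsupp.sum_single_index]
  · rw [coefz₂ P w hadd₂ hwadd]; simp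
  · rw [Finsupp.sum_single_index]
    · rw [coefz₁ P w hadd₁ hwadd]; simp
    · rw [coefz₂ P w hadd₂ hwadd]; simp

theorem Bc_mono (hadd₁ : ∀ a b c : A, P (a + b) c = P a c + P b c)
    (hadd₂ : ∀ a b c : A, P a (b + c) = P a b + P a c)
    (hwadd : ∀ a b : A, w (a + b) = w a + w b) (a b : A) (n m : ℤ) :
    Bc P w (LaurentPolynomial.C a * T n) (LaurentPolynomial.C b * T m) =
      LaurentPolynomial.C (P a b + n • (a * w b) - m • (b * w a)) * T (n + m) := by
  rw [← single_eq_C_mul_T, ← single_eq_C_mul_T, Bc_single P w hadd₁ hadd₂ hwadd]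

theorem Bc_add₁ (hadd₁ : ∀ a b c : A, P (a + b) c = P a c + P b c)
    (hwadd : ∀ a b : A, w (a + b) = w a + w b) (x y z : LaurentPolynomial A) :
    Bc P w (x + y) z = Bc P w x z + Bc P w y z := by
  unfold Bc
  rw [AddMonoidAlgebra.coeff_add, Finsupp.sum_add_index']
  · intro n
    have h1 : ∀ b : A, P 0 b = 0 := fun b => by have := hadd₁ 0 0 b; simpa using this.symm
    have h2 : w (0:A) = 0 := by have := hwadd 0 0; simpa using this.symm
    simp [h1, h2]
  · intro n a a'
    rw [← Finsupp.sum_add]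
    congr 1; funext m b
    have : P (a + a') b + n • ((a + a') * w b) - m • (b * w (a + a'))
        = (P a b + n • (a * w b) - m • (b * w a)) + (P a' b + n • (a' * w b) - m • (b * w a')) := by
      simp only [hadd₁, hwadd, zsmul_eq_mul]; ring
    rw [this, map_add, add_mul]

theorem Bc_add₂ (hadd₂ : ∀ a b c : A, P a (b + c) = P a b + P a c)
    (hwadd : ∀ a b : A, w (a + b) = w a + w b) (x y z : LaurentPolynomial A) :
    Bc P w x (y + z) = Bc P w x y + Bc P w x z := by
  unfold Bc
  rw [← Finsupp.sum_add]
  congr 1; funext n a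
  rw [AddMonoidAlgebra.coeff_add, Finsupp.sum_add_index']
  · intro m
    have h1 : P a 0 = 0 := by have := hadd₂ a 0 0; simpa using this.symm
    have h2 : w (0:A) = 0 := by have := hwadd 0 0; simpa using this.symm
    simp [h1, h2]
  · intro m b b'
    have : P a (b + b') + n • (a * w (b + b')) - m • ((b + b') * w a)
        = (P a b + n • (a * w b) - m • (b * w a)) + (P a b' + n • (a * w b') - m • (b' * w a)) := by
      simp only [hadd₂, hwadd, zsmul_eq_mul]; ring
    rw [this, map_add, add_mul]
end Bc

section Props
variable {A : Type*} [CommRing A] (P : A → A → A) (w : A → A)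
  (B : LaurentPolynomial A → LaurentPolynomial A → LaurentPolynomial A)

theorem spec_anti
    (hanti : ∀ a b : A, P a b = - P b a)
    (hb1 : ∀ x y z : LaurentPolynomial A, B (x + y) z = B x z + B y z)
    (hb2 : ∀ x y z : LaurentPolynomial A, B x (y + z) = B x y + B x z)
    (hb3 : ∀ (a b : A) (n m : ℤ),
      B (LaurentPolynomial.C a * T n) (LaurentPolynomial.C b * T m) =
        LaurentPolynomial.C (P a b + n • (a * w b) - m • (b * w a)) * T (n + m)) :
    ∀ x y, B x y = - B y x := by
  have hz : ∀ x y, B x y + B y x = 0 := by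
    refine biadd_eq_zero _ (fun p q y => by rw [hb1, hb2]; ring)
      (fun x p q => by rw [hb1, hb2]; ring) ?_
    intro a b n m
    rw [hb3, hb3, show m + n = n + m from add_comm m n, ← add_mul, ← map_add]
    have h := pc_anti P w hanti n m a b
    simp only [pc] at h
    rw [h, map_zero, zero_mul]
  intro x y
  linear_combination hz x y

theorem spec_leib
    (hleib : ∀ a b c : A, P a (b * c) = P a b * c + b * P a c)
    (hwleib : ∀ a b : A, w (a * b) = a * w b + b * w a)
    (hb2 : ∀ x y z : LaurentPolynomial A, B x (y + z) = B x y + B x z)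
    (hb1 : ∀ x y z : LaurentPolynomial A, B (x + y) z = B x z + B y z)
    (hb3 : ∀ (a b : A) (n m : ℤ),
      B (LaurentPolynomial.C a * T n) (LaurentPolynomial.C b * T m) =
        LaurentPolynomial.C (P a b + n • (a * w b) - m • (b * w a)) * T (n + m)) :
    ∀ x y z, B x (y * z) = B x y * z + y * B x z := by
  have hz : ∀ x y z, B x (y * z) - B x y * z - y * B x z = 0 := by
    refine triadd_eq_zero _ (fun p q y z => by simp only [hb1]; ring)
      (fun x p q z => by rw [add_mul, hb2, hb2]; ring)
      (fun x y p q => by rw [mul_add, hb2, hb2]; ring) ?_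
    intro a b c n m k
    rw [CT_mul, hb3, hb3, hb3, CT_mul, CT_mul,
      show n + m + k = n + (m + k) from by ring,
      show m + (n + k) = n + (m + k) from by ring,
      ← sub_mul, ← sub_mul, ← map_sub, ← map_sub]
    have h := pc_leib P w hleib hwleib n m k a b c
    simp only [pc] at h
    rw [show P a (b * c) + n • (a * w (b * c)) - (m + k) • (b * c * w a) -
        (P a b + n • (a * w b) - m • (b * w a)) * c - b * (P a c + n • (a * w c) - k • (c * w a))
        = 0 from by linear_combination h, map_zero, zero_mul]
  intro x y z
  linear_combination hz x y z

theorem spec_jacobi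
    (hadd₂ : ∀ a b c : A, P a (b + c) = P a b + P a c)
    (hanti : ∀ a b : A, P a b = - P b a)
    (hleib : ∀ a b c : A, P a (b * c) = P a b * c + b * P a c)
    (hjacobi : ∀ a b c : A, P a (P b c) + P b (P c a) + P c (P a b) = 0)
    (hwadd : ∀ a b : A, w (a + b) = w a + w b)
    (hwleib : ∀ a b : A, w (a * b) = a * w b + b * w a)
    (hwpoisson : ∀ a b : A, w (P a b) = P (w a) b + P a (w b))
    (hb1 : ∀ x y z : LaurentPolynomial A, B (x + y) z = B x z + B y z)
    (hb2 : ∀ x y z : LaurentPolynomial A, B x (y + z) = B x y + B x z)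
    (hb3 : ∀ (a b : A) (n m : ℤ),
      B (LaurentPolynomial.C a * T n) (LaurentPolynomial.C b * T m) =
        LaurentPolynomial.C (P a b + n • (a * w b) - m • (b * w a)) * T (n + m)) :
    ∀ x y z, B x (B y z) + B y (B z x) + B z (B x y) = 0 := by
  refine triadd_eq_zero _ ?_ ?_ ?_ ?_
  · intro p q y z
    rw [hb1 p q (B y z), hb2 z p q, hb2 y (B z p) (B z q), hb1 p q y, hb2 z (B p y) (B q y)]
    ring
  · intro x p q z
    rw [hb1 p q z, hb2 x (B p z) (B q z), hb1 p q (B z x), hb2 x p q, hb2 z (B x p) (B x q)]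
    ring
  · intro x y p q
    rw [hb2 y p q, hb2 x (B y p) (B y q), hb1 p q x, hb2 y (B p x) (B q x), hb1 p q (B x y)]
    ring
  · intro a b c n m k
    simp only [hb3]
    rw [show m + (k + n) = n + (m + k) from by ring,
      show k + (n + m) = n + (m + k) from by ring,
      ← add_mul, ← add_mul, ← map_add, ← map_add]
    have h := pc_jacobi P w hadd₂ hanti hleib hjacobi hwadd hwleib hwpoisson n m k a b c
    simp only [pc] at h
    rw [h, map_zero, zero_mul]
end Props


/-- Let `P` be a Poisson bracket on a commutative ring `A` and `w` a derivation
of `A` which is a Poisson vector field.  Then there is a unique biadditive bracket `B` on the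
Laurent polynomial ring `A[t,t⁻¹]` with
`B(a·tⁿ, b·tᵐ) = ({a,b} + n·(a·w(b)) − m·(b·w(a)))·t^(n+m)`, and any such `B` is a Poisson
bracket: antisymmetric, Leibniz in each argument, and satisfying the Jacobi identity.
(This is the Poisson structure `π^w = π + t∂ₜ ∧ w` on `A[t,t⁻¹]`.) -/
theorem laurent_poisson_structure
    (A : Type*) [CommRing A] (P : A → A → A)
    (hadd₁ : ∀ a b c : A, P (a + b) c = P a c + P b c)
    (hadd₂ : ∀ a b c : A, P a (b + c) = P a b + P a c)
    (hanti : ∀ a b : A, P a b = - P b a)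
    (hleib : ∀ a b c : A, P a (b * c) = P a b * c + b * P a c)
    (hjacobi : ∀ a b c : A, P a (P b c) + P b (P c a) + P c (P a b) = 0)
    (w : A → A)
    (hwadd : ∀ a b : A, w (a + b) = w a + w b)
    (hwleib : ∀ a b : A, w (a * b) = a * w b + b * w a)
    (hwpoisson : ∀ a b : A, w (P a b) = P (w a) b + P a (w b)) :
    (∃! B : LaurentPolynomial A → LaurentPolynomial A → LaurentPolynomial A,
      (∀ x y z : LaurentPolynomial A, B (x + y) z = B x z + B y z) ∧
      (∀ x y z : LaurentPolynomial A, B x (y + z) = B x y + B x z) ∧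
      (∀ (a b : A) (n m : ℤ),
        B (LaurentPolynomial.C a * T n) (LaurentPolynomial.C b * T m) =
          LaurentPolynomial.C (P a b + n • (a * w b) - m • (b * w a)) * T (n + m))) ∧
    (∀ B : LaurentPolynomial A → LaurentPolynomial A → LaurentPolynomial A,
      ((∀ x y z : LaurentPolynomial A, B (x + y) z = B x z + B y z) ∧
       (∀ x y z : LaurentPolynomial A, B x (y + z) = B x y + B x z) ∧
       (∀ (a b : A) (n m : ℤ),
         B (LaurentPolynomial.C a * T n) (LaurentPolynomial.C b * T m) =
           LaurentPolynomial.C (P a b + n • (a * w b) - m • (b * w a)) * T (n + m))) →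
      ((∀ x y : LaurentPolynomial A, B x y = - B y x) ∧
       (∀ x y z : LaurentPolynomial A, B x (y * z) = B x y * z + y * B x z) ∧
       (∀ x y z : LaurentPolynomial A, B (x * y) z = x * B y z + y * B x z) ∧
       (∀ x y z : LaurentPolynomial A, B x (B y z) + B y (B z x) + B z (B x y) = 0))) := by
  constructor
  · refine ⟨Bc P w, ⟨Bc_add₁ P w hadd₁ hwadd, Bc_add₂ P w hadd₂ hwadd,
      Bc_mono P w hadd₁ hadd₂ hwadd⟩, ?_⟩
    rintro B' ⟨h1, h2, h3⟩
    funext x y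
    have hz : ∀ x y, B' x y - Bc P w x y = 0 := by
      refine biadd_eq_zero _ (fun p q y => by
          rw [h1, Bc_add₁ P w hadd₁ hwadd]; ring)
        (fun x p q => by rw [h2, Bc_add₂ P w hadd₂ hwadd]; ring) ?_
      intro a b n m
      rw [h3, Bc_mono P w hadd₁ hadd₂ hwadd, sub_self]
    exact sub_eq_zero.mp (hz x y)
  · rintro B ⟨hb1, hb2, hb3⟩
    have hA := spec_anti P w B hanti hb1 hb2 hb3
    have hL := spec_leib P w B hleib hwleib hb2 hb1 hb3
    refine ⟨hA, hL, fun x y z => ?_,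
      spec_jacobi P w B hadd₂ hanti hleib hjacobi hwadd hwleib hwpoisson hb1 hb2 hb3⟩
    linear_combination hA (x * y) z - hL z x y - y * hA z x - x * hA z y
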